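/- Let C_n be a cycle with vertices v₁, …, v_n in order, edge ideals α(e_{i,i+1}) for 1 ≤ i ≤ n−1 and α(e_{1,n}). For any choices p_{v₁} ∈ R, α_{i,i+1} ∈ α(e_{i,i+1}), and α_{1,n} ∈ α(e_{1,n}), the tuple p defined by p_{v₁} = p_{v₁} and p_{v_k} = p_{v₁} + α_{1,n}·(α_{1,2} + α_{2,3} + ⋯ + α_{k−1,k}) for 2 ≤ k ≤ n is a generalized spline on C_n. -/

import Mathlib

/-- Generalized splines on the cycle `C_n` (vertices `v₁, …, v_n` in order, edge `v_i v_{i+1}`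
labeled by the ideal `I i` for `1 ≤ i ≤ n-1`, and edge `v₁ v_n` labeled by `I1n`).
For any choices `p₁ ∈ R`, `a i ∈ I i`, and `b ∈ I1n`, the tuple defined by
`p_k = p₁ + b·(a₁ + a₂ + ⋯ + a_{k-1})` satisfies the GKM condition at every edge of the
cycle, i.e. it is a generalized spline on `C_n`. -/
theorem spline_on_cycle {R : Type*} [CommRing R] (n : ℕ) (hn : 3 ≤ n)
    (I : ℕ → Ideal R) (I1n : Ideal R) (p1 : R)
    (a : ℕ → R) (ha : ∀ i, 1 ≤ i → i ≤ n - 1 → a i ∈ I i)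
    (b : R) (hb : b ∈ I1n) (p : ℕ → R)
    (hp : ∀ k, 1 ≤ k → k ≤ n → p k = p1 + b * ∑ i ∈ Finset.Ico 1 k, a i) :
    (∀ i, 1 ≤ i → i ≤ n - 1 → p (i + 1) - p i ∈ I i) ∧ p n - p 1 ∈ I1n := by
  constructor
  · intro i hi1 hin
    have h1 : i ≤ n := le_trans hin (Nat.sub_le n 1)
    have h2 : i + 1 ≤ n := by omega
    rw [hp (i+1) (by omega) h2, hp i hi1 h1,
      Finset.sum_Ico_succ_top hi1]
    ring_nf
    exact Ideal.mul_mem_left _ _ (ha i hi1 hin)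
  · rw [hp n (by omega) le_rfl, hp 1 (by omega) (by omega)]
    simp only [Finset.Ico_self, Finset.sum_empty, mul_zero, add_zero]
    rw [show p1 + b * ∑ i ∈ Finset.Ico 1 n, a i - p1 = b * ∑ i ∈ Finset.Ico 1 n, a i by ring]
    exact Ideal.mul_mem_right _ _ hb
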